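/- Let ρ be a d×d complex positive semidefinite matrix with trace 1 (a density matrix). Then ρ belongs to the convex hull (over ℝ) of the set {cc^T : c ∈ ℝ^d, ‖c‖ = 1} of projectors onto real unit vectors (viewed as complex matrices with real entries) if and only if all entries of ρ are real, i.e., ρ equals its entrywise complex conjugate. -/

import Mathlib

open scoped ComplexOrder

/-- A density matrix is a statistical mixture of pure states with real
probability amplitudes (projectors onto real unit vectors) if and only if all
its entries are real. -/
theorem redit_classical_iff_real_entries
    {d : ℕ} (ρ : Matrix (Fin d) (Fin d) ℂ)
    (hpsd : ρ.PosSemidef) (htr : ρ.trace = 1) :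
    ρ ∈ convexHull ℝ {M : Matrix (Fin d) (Fin d) ℂ |
        ∃ c : Fin d → ℝ, (∑ i, c i ^ 2 = 1) ∧
          M = Matrix.of fun i j => ((c i * c j : ℝ) : ℂ)} ↔
      ∀ i j, ρ i j = starRingEnd ℂ (ρ i j) := by
  constructor
  · -- forward: the set of matrices with real entries is convex and contains the generators
    intro hmem
    have hsub : {M : Matrix (Fin d) (Fin d) ℂ |
        ∃ c : Fin d → ℝ, (∑ i, c i ^ 2 = 1) ∧
          M = Matrix.of fun i j => ((c i * c j : ℝ) : ℂ)} ⊆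
        {M : Matrix (Fin d) (Fin d) ℂ | ∀ i j, M i j = starRingEnd ℂ (M i j)} := by
      rintro M ⟨c, -, rfl⟩ i j
      simp
    have hconv : Convex ℝ {M : Matrix (Fin d) (Fin d) ℂ |
        ∀ i j, M i j = starRingEnd ℂ (M i j)} := by
      intro x hx y hy a b _ _ _
      intro i j
      simp only [Matrix.add_apply, Matrix.smul_apply, map_add, Complex.real_smul,
        map_mul, Complex.conj_ofReal]
      rw [← hx i j, ← hy i j]
    have := convexHull_min hsub hconv hmem
    exact this
  · intro hreal
    classical
    -- real part matrix
    set B : Matrix (Fin d) (Fin d) ℝ := Matrix.of fun i j => (ρ i j).re with hBdef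
    have hρB : ∀ i j, ρ i j = ((B i j : ℝ) : ℂ) := by
      intro i j
      have h := hreal i j
      have him : (ρ i j).im = 0 := by
        have := congrArg Complex.im h
        simp [Complex.conj_im] at this
        linarith
      apply Complex.ext <;> simp [hBdef, him]
    -- B is positive semidefinite over ℝ
    have hBpsd : B.PosSemidef := by
      refine Matrix.PosSemidef.of_dotProduct_mulVec_nonneg ?_ ?_
      · ext i j
        have h1 := hpsd.1
        have := congrFun (congrFun h1 i) j
        simp only [Matrix.conjTranspose_apply] at this
        have h2 : ρ j i = ρ i j := by
          rw [hreal j i]; exact this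
        simp [hBdef, Matrix.transpose_apply, h2]
      · intro x
        have h := hpsd.dotProduct_mulVec_nonneg (fun i => ((x i : ℝ) : ℂ))
        have hre := h.1
        simp only [dotProduct, Matrix.mulVec, Pi.star_apply, RCLike.star_def] at hre ⊢
        have : ∀ i, (starRingEnd ℂ ((x i : ℝ) : ℂ)) *
            (∑ j, ρ i j * ((x j : ℝ) : ℂ)) =
            (((x i * ∑ j, B i j * x j : ℝ)) : ℂ) := by
          intro i
          rw [Complex.conj_ofReal]
          push_cast
          congr 1
          refine Finset.sum_congr rfl fun j _ => ?_
          rw [hρB i j]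
        calc (0 : ℝ) ≤ (Complex.re (∑ i, (starRingEnd ℂ ((x i : ℝ) : ℂ)) *
              (∑ j, ρ i j * ((x j : ℝ) : ℂ)))) := by
                simpa using hre
          _ = ∑ i, x i * ∑ j, B i j * x j := by
              rw [Finset.sum_congr rfl fun i _ => this i]
              push_cast
              simp
    have hB : B.IsHermitian := hBpsd.1
    set u : Fin d → Fin d → ℝ := fun k => ⇑(hB.eigenvectorBasis k) with hu
    set lam : Fin d → ℝ := hB.eigenvalues with hlam
    -- entrywise spectral decomposition
    have hspec : ∀ i j, B i j = ∑ k, lam k * (u k i * u k j) := by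
      intro i j
      conv_lhs => rw [hB.spectral_theorem, Unitary.conjStarAlgAut_apply]
      simp only [Matrix.mul_apply, Unitary.coe_star, Matrix.star_apply, Matrix.diagonal_apply,
        Matrix.IsHermitian.eigenvectorUnitary_apply, star_trivial, Function.comp,
        RCLike.ofReal_real_eq_id, id_eq, ite_mul, zero_mul, Finset.sum_ite_eq,
        Finset.mem_univ, if_true, Finset.sum_ite_eq', hu, hlam]
      refine Finset.sum_congr rfl fun k _ => ?_
      rw [Finset.sum_eq_single k (fun b _ hb => by simp [hb]) (by simp)]
      simp only [if_true]
      ring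
    -- unit norm of eigenvectors
    have hnorm : ∀ k, ∑ i, (u k i) ^ 2 = 1 := by
      intro k
      have h1 : ‖hB.eigenvectorBasis k‖ = 1 := hB.eigenvectorBasis.orthonormal.1 k
      have h2 : (inner ℝ (hB.eigenvectorBasis k) (hB.eigenvectorBasis k) : ℝ) = 1 := by
        rw [real_inner_self_eq_norm_sq, h1]; norm_num
      rw [← h2, PiLp.inner_apply]
      refine Finset.sum_congr rfl fun i _ => ?_
      simp [hu, sq, mul_comm]
    -- weights sum to 1
    have hsum : ∑ k, lam k = 1 := by
      have ht : ∑ i, B i i = 1 := by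
        have : ρ.trace = ((∑ i, B i i : ℝ) : ℂ) := by
          rw [Matrix.trace]
          push_cast
          refine Finset.sum_congr rfl fun i _ => ?_
          simp [Matrix.diag, hρB i i]
        rw [htr] at this
        exact_mod_cast this.symm
      rw [← ht]
      rw [Finset.sum_congr rfl fun i (_ : i ∈ Finset.univ) => hspec i i]
      rw [Finset.sum_comm]
      refine Finset.sum_congr rfl fun k _ => ?_
      rw [← Finset.mul_sum]
      have : ∑ i, u k i * u k i = 1 := by
        rw [← hnorm k]; exact Finset.sum_congr rfl fun i _ => (sq (u k i)).symm
      rw [this, mul_one]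
    -- express ρ as convex combination
    have hdecomp : ρ = ∑ k, lam k •
        (Matrix.of fun i j => (((u k i * u k j : ℝ)) : ℂ)) := by
      ext i j
      rw [hρB i j, hspec i j]
      simp only [Matrix.sum_apply, Matrix.smul_apply, Matrix.of_apply]
      push_cast [Complex.real_smul]
      norm_num
    rw [hdecomp]
    have hz : ∀ k ∈ (Finset.univ : Finset (Fin d)),
        (Matrix.of fun i j => (((u k i * u k j : ℝ)) : ℂ)) ∈
          {M : Matrix (Fin d) (Fin d) ℂ | ∃ c : Fin d → ℝ, (∑ i, c i ^ 2 = 1) ∧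
            M = Matrix.of fun i j => ((c i * c j : ℝ) : ℂ)} :=
      fun k _ => ⟨u k, hnorm k, rfl⟩
    have := Finset.centerMass_mem_convexHull (R := ℝ) Finset.univ
      (w := lam) (z := fun k => (Matrix.of fun i j => (((u k i * u k j : ℝ)) : ℂ)))
      (fun k _ => hBpsd.eigenvalues_nonneg k)
      (by rw [hsum]; norm_num) hz
    rwa [Finset.centerMass, hsum, inv_one, one_smul] at this
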